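/- Let G be a finite simple graph, s a vertex of G, and h ≥ 1, p ≥ 1 integers. Let C be a 2-edge-connected subgraph of G whose hop-diameter (within C) is at most h. If some vertex of C belongs to B'(s,hp), then every vertex and every edge of C belongs to B'(s,h(p+1)). -/

import Mathlib

/-- The hop-ball of radius `ℓ` around `u`: vertices joined to `u` by a walk of
hop-length at most `ℓ`. -/
def hopBall {V : Type*} (G : SimpleGraph V) (u : V) (ℓ : ℕ) : Set V :=
  {v | ∃ p : G.Walk u v, p.length ≤ ℓ}

/-- A subgraph is 2-edge-connected if it is connected and remains connected after
deleting any single edge. -/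
def Subgraph.TwoEdgeConnected {V : Type*} {G : SimpleGraph V} (H : G.Subgraph) : Prop :=
  H.Connected ∧ ∀ e ∈ H.edgeSet, (H.deleteEdges {e}).Connected

/-- `B'(u, ℓ)`: the maximal 2-edge-connected subgraph of `G[B(u, ℓ)]` containing `u`,
i.e. the union of all 2-edge-connected subgraphs of the ball-induced subgraph that
contain `u`. -/
noncomputable def maxTwoEdgeConnBall {V : Type*} (G : SimpleGraph V) (u : V) (ℓ : ℕ) :
    G.Subgraph :=
  sSup {H : G.Subgraph | H.verts ⊆ hopBall G u ℓ ∧ u ∈ H.verts ∧ Subgraph.TwoEdgeConnected H}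


section Aux
variable {V : Type*} {G : SimpleGraph V}

lemma deleteEdges_sup' (H K : G.Subgraph) (E : Set (Sym2 V)) :
    (H ⊔ K).deleteEdges E = H.deleteEdges E ⊔ K.deleteEdges E := by
  ext v w
  · simp [SimpleGraph.Subgraph.deleteEdges_verts]
  · simp only [SimpleGraph.Subgraph.deleteEdges_adj, SimpleGraph.Subgraph.sup_adj]
    tauto

lemma deleteEdges_not_mem' (K : G.Subgraph) {e : Sym2 V} (he : e ∉ K.edgeSet) :
    K.deleteEdges {e} = K := by
  ext v w
  · simp
  · simp only [SimpleGraph.Subgraph.deleteEdges_adj, Set.mem_singleton_iff]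
    constructor
    · tauto
    · intro hadj
      refine ⟨hadj, fun hhe => he ?_⟩
      rw [← hhe] at he ⊢
      exact hadj

lemma twoEdgeConnected_sup' {H K : G.Subgraph}
    (hH : Subgraph.TwoEdgeConnected H) (hK : Subgraph.TwoEdgeConnected K)
    (hn : (H ⊓ K).verts.Nonempty) : Subgraph.TwoEdgeConnected (H ⊔ K) := by
  refine ⟨SimpleGraph.Subgraph.connected_sup hH.1.preconnected hK.1.preconnected hn, fun e he => ?_⟩
  rw [deleteEdges_sup']
  have hn' : ((H.deleteEdges {e}) ⊓ (K.deleteEdges {e})).verts.Nonempty := by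
    simpa [SimpleGraph.Subgraph.deleteEdges_verts] using hn
  rw [SimpleGraph.Subgraph.edgeSet_sup] at he
  have hHc : (H.deleteEdges {e}).Connected := by
    by_cases hmem : e ∈ H.edgeSet
    · exact hH.2 e hmem
    · rw [deleteEdges_not_mem' H hmem]; exact hH.1
  have hKc : (K.deleteEdges {e}).Connected := by
    by_cases hmem : e ∈ K.edgeSet
    · exact hK.2 e hmem
    · rw [deleteEdges_not_mem' K hmem]; exact hK.1
  exact SimpleGraph.Subgraph.connected_sup hHc.preconnected hKc.preconnected hn'

end Aux

/-- Let `C` be a 2-edge-connected subgraph of `G` whose hop-diameter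
(within `C`) is at most `h`.  If some vertex of `C` belongs to `B'(s, h·p)`, then every
vertex and every edge of `C` belongs to `B'(s, h·(p+1))`. -/
theorem twoEdgeConn_captured_by_larger_ball
    {V : Type*} [Fintype V] [DecidableEq V] (G : SimpleGraph V)
    (s : V) (h p : ℕ) (hh : 1 ≤ h) (hp : 1 ≤ p)
    (C : G.Subgraph) (hC : Subgraph.TwoEdgeConnected C)
    (hdiam : ∀ a ∈ C.verts, ∀ b ∈ C.verts,
      ∃ q : C.spanningCoe.Walk a b, q.length ≤ h)
    (hmeet : ∃ v ∈ C.verts, v ∈ (maxTwoEdgeConnBall G s (h * p)).verts) :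
    C.verts ⊆ (maxTwoEdgeConnBall G s (h * (p + 1))).verts ∧
    C.edgeSet ⊆ (maxTwoEdgeConnBall G s (h * (p + 1))).edgeSet := by
  obtain ⟨v, hvC, hvB⟩ := hmeet
  rw [maxTwoEdgeConnBall, SimpleGraph.Subgraph.verts_sSup, Set.mem_iUnion₂] at hvB
  obtain ⟨H, ⟨hHball, hsH, hH2⟩, hvH⟩ := hvB
  obtain ⟨w0, hw0⟩ : v ∈ hopBall G s (h * p) := hHball hvH
  have hKmem : H ⊔ C ∈ {K : G.Subgraph | K.verts ⊆ hopBall G s (h * (p + 1)) ∧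
      s ∈ K.verts ∧ Subgraph.TwoEdgeConnected K} := by
    refine ⟨?_, Or.inl hsH, twoEdgeConnected_sup' hH2 hC ⟨v, hvH, hvC⟩⟩
    rintro x (hx | hx)
    · obtain ⟨q, hq⟩ := hHball hx
      exact ⟨q, hq.trans (Nat.mul_le_mul_left h (Nat.le_succ p))⟩
    · obtain ⟨q, hq⟩ := hdiam v hvC x hx
      refine ⟨w0.append (q.mapLe C.spanningCoe_le), ?_⟩
      rw [SimpleGraph.Walk.length_append]
      have : (q.mapLe C.spanningCoe_le).length = q.length := SimpleGraph.Walk.length_map _ _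
      rw [this, Nat.mul_succ]
      exact Nat.add_le_add hw0 hq
  have hle : H ⊔ C ≤ maxTwoEdgeConnBall G s (h * (p + 1)) := le_sSup hKmem
  constructor
  · exact fun x hx => hle.1 (Or.inr hx)
  · exact fun e he => SimpleGraph.Subgraph.edgeSet_mono hle
      (by rw [SimpleGraph.Subgraph.edgeSet_sup]; exact Or.inr he)
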